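/- Let B be a chordal building set on [n], let ℓ ≥ 2, and let J_1,…,J_ℓ ∈ B be pairwise disjoint sets whose union J_1 ∪ ⋯ ∪ J_ℓ belongs to B. Then there exists an index i ∈ {1,…,ℓ} such that (J_1 ∪ ⋯ ∪ J_ℓ) ∖ J_i belongs to B. (Consequently, for a chordal building set B the nestohedron P_B is a flag simple polytope.) -/

import Mathlib

/-- A building set on `[n]`. -/
def IsBuildingSet {n : ℕ} (B : Finset (Finset (Fin n))) : Prop :=
  (∀ I ∈ B, I.Nonempty) ∧
  (∀ I ∈ B, ∀ J ∈ B, (I ∩ J).Nonempty → I ∪ J ∈ B) ∧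
  (∀ i : Fin n, {i} ∈ B)

/-- A chordal building set. -/
def IsChordal {n : ℕ} (B : Finset (Finset (Fin n))) : Prop :=
  ∀ I ∈ B, ∀ m ∈ I, I.filter (fun i => m ≤ i) ∈ B

lemma chordal_aux (n ℓ : ℕ) (hℓ : 2 ≤ ℓ)
    (B : Finset (Finset (Fin n))) (hB : IsBuildingSet B) (hch : IsChordal B) :
    ∀ N (J : Fin ℓ → Finset (Fin n)), (Finset.univ.biUnion J).card ≤ N →
      (∀ s, J s ∈ B) → (∀ s t : Fin ℓ, s ≠ t → Disjoint (J s) (J t)) →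
      Finset.univ.biUnion J ∈ B →
      ∃ i : Fin ℓ, Finset.univ.biUnion J \ J i ∈ B := by
  intro N
  induction N with
  | zero =>
    intro J hcard hJ hdisj hunion
    have hne := hB.1 _ hunion
    have := Finset.card_pos.mpr hne
    omega
  | succ N ih =>
    intro J hcard hJ hdisj hunion
    set U := Finset.univ.biUnion J with hU
    have hnd : ∀ {s t : Fin ℓ} {x}, s ≠ t → x ∈ J s → x ∉ J t :=
      fun hst hx => Finset.disjoint_left.mp (hdisj _ _ hst) hx
    have hUne : U.Nonempty := hB.1 _ hunion
    set m := U.min' hUne with hm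
    have hmU : m ∈ U := U.min'_mem hUne
    obtain ⟨i0, -, hmi0⟩ := Finset.mem_biUnion.mp hmU
    -- V = U \ J i0
    set V := U \ J i0 with hV
    have hVne : V.Nonempty := by
      obtain ⟨t, ht⟩ := Fintype.exists_ne_of_one_lt_card (by simpa using (show 1 < ℓ by omega)) i0
      obtain ⟨x, hx⟩ := hB.1 _ (hJ t)
      refine ⟨x, Finset.mem_sdiff.mpr ⟨Finset.mem_biUnion.mpr ⟨t, Finset.mem_univ _, hx⟩, ?_⟩⟩
      exact hnd ht hx
    set b := V.min' hVne with hb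
    have hbV : b ∈ V := V.min'_mem hVne
    have hbU : b ∈ U := (Finset.mem_sdiff.mp hbV).1
    have hbni0 : b ∉ J i0 := (Finset.mem_sdiff.mp hbV).2
    have hmb : m < b := lt_of_le_of_ne (U.min'_le _ hbU) (fun h => hbni0 (h ▸ hmi0))
    -- U' ∈ B by chordality
    set U' := U.filter (fun x => b ≤ x) with hU'
    have hU'B : U' ∈ B := hch _ hunion b hbU
    have hVsub : V ⊆ U' := by
      intro x hx
      exact Finset.mem_filter.mpr ⟨(Finset.mem_sdiff.mp hx).1, V.min'_le x hx⟩
    set K := (J i0).filter (fun x => b ≤ x) with hK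
    by_cases hKne : K.Nonempty
    · -- K ∈ B by chordality
      set m' := K.min' hKne with hm'
      have hm'K : m' ∈ K := K.min'_mem hKne
      have hm'i0 : m' ∈ J i0 := (Finset.mem_filter.mp hm'K).1
      have hbm' : b ≤ m' := (Finset.mem_filter.mp hm'K).2
      have hKeq : K = (J i0).filter (fun x => m' ≤ x) := by
        ext x
        simp only [hK, Finset.mem_filter]
        constructor
        · rintro ⟨h1, h2⟩; exact ⟨h1, K.min'_le x (Finset.mem_filter.mpr ⟨h1, h2⟩)⟩
        · rintro ⟨h1, h2⟩; exact ⟨h1, le_trans hbm' h2⟩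
      have hKB : K ∈ B := hKeq ▸ hch _ (hJ i0) m' hm'i0
      set J' := Function.update J i0 K with hJ'
      have hJ's : ∀ s, J' s ∈ B := by
        intro s
        rcases eq_or_ne s i0 with rfl | hs
        · simpa [hJ'] using hKB
        · simpa [hJ', Function.update_of_ne hs] using hJ s
      have hKsub : K ⊆ J i0 := Finset.filter_subset _ _
      have hJ'sub : ∀ s, J' s ⊆ J s := by
        intro s
        rcases eq_or_ne s i0 with rfl | hs
        · simpa [hJ'] using hKsub
        · simp [hJ', Function.update_of_ne hs]
      have hdisj' : ∀ s t : Fin ℓ, s ≠ t → Disjoint (J' s) (J' t) := fun s t hst =>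
        ((hdisj s t hst).mono (hJ'sub s) (hJ'sub t))
      -- union J' = U'
      have hunion' : Finset.univ.biUnion J' = U' := by
        ext x
        simp only [Finset.mem_biUnion, Finset.mem_univ, true_and, hU', Finset.mem_filter]
        constructor
        · rintro ⟨s, hx⟩
          rcases eq_or_ne s i0 with rfl | hs
          · rw [hJ', Function.update_self] at hx
            exact ⟨Finset.mem_biUnion.mpr ⟨s, Finset.mem_univ _, hKsub hx⟩,
              (Finset.mem_filter.mp hx).2⟩
          · rw [hJ', Function.update_of_ne hs] at hx
            have hxU : x ∈ U := Finset.mem_biUnion.mpr ⟨s, Finset.mem_univ _, hx⟩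
            have hxV : x ∈ V := Finset.mem_sdiff.mpr ⟨hxU, hnd hs hx⟩
            exact ⟨hxU, V.min'_le x hxV⟩
        · rintro ⟨hxU, hbx⟩
          obtain ⟨s, -, hxs⟩ := Finset.mem_biUnion.mp hxU
          rcases eq_or_ne s i0 with rfl | hs
          · refine ⟨s, ?_⟩
            rw [hJ', Function.update_self]
            exact Finset.mem_filter.mpr ⟨hxs, hbx⟩
          · refine ⟨s, ?_⟩
            rw [hJ', Function.update_of_ne hs]
            exact hxs
      have hU'card : U'.card ≤ N := by
        have hsub : U' ⊆ U := Finset.filter_subset _ _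
        have hssub : U' ⊂ U := Finset.ssubset_iff_of_subset hsub |>.mpr
          ⟨m, hmU, by simp [hU', Finset.mem_filter]; intro _; exact hmb⟩
        have := Finset.card_lt_card hssub
        omega
      obtain ⟨i, hi⟩ := ih J' (by rw [hunion']; exact hU'card) hJ's hdisj'
        (by rw [hunion']; exact hU'B)
      rw [hunion'] at hi
      rcases eq_or_ne i i0 with rfl | hii0
      · -- U' \ K = V
        refine ⟨i, ?_⟩
        have heq : U' \ J' i = U \ J i := by
          ext x
          simp only [Finset.mem_sdiff, hU', Finset.mem_filter, hJ',
            Function.update_self, hK]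
          constructor
          · rintro ⟨⟨hxU, hbx⟩, hxK⟩
            exact ⟨hxU, fun hxi0 => hxK ⟨hxi0, hbx⟩⟩
          · rintro ⟨hxU, hxi0⟩
            have hxV : x ∈ V := Finset.mem_sdiff.mpr ⟨hxU, hxi0⟩
            exact ⟨⟨hxU, V.min'_le x hxV⟩, fun h => hxi0 h.1⟩
        rw [heq] at hi
        exact hi
      · -- glue J i0 back
        have hJ'i : J' i = J i := by rw [hJ', Function.update_of_ne hii0]
        rw [hJ'i] at hi
        have hinter : ((U' \ J i) ∩ J i0).Nonempty := by
          refine ⟨m', Finset.mem_inter.mpr ⟨Finset.mem_sdiff.mpr ⟨?_, ?_⟩, hm'i0⟩⟩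
          · rw [← hunion']
            exact Finset.mem_biUnion.mpr ⟨i0, Finset.mem_univ _,
              by rw [hJ', Function.update_self]; exact hm'K⟩
          · exact hnd (Ne.symm hii0) hm'i0
        have hW : (U' \ J i) ∪ J i0 ∈ B := hB.2.1 _ hi _ (hJ i0) hinter
        refine ⟨i, ?_⟩
        have heq : (U' \ J i) ∪ J i0 = U \ J i := by
          ext x
          simp only [Finset.mem_union, Finset.mem_sdiff]
          constructor
          · rintro (⟨hxU', hxi⟩ | hxi0)
            · exact ⟨Finset.mem_of_mem_filter x hxU', hxi⟩
            · refine ⟨Finset.mem_biUnion.mpr ⟨i0, Finset.mem_univ _, hxi0⟩, ?_⟩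
              exact hnd (Ne.symm hii0) hxi0
          · rintro ⟨hxU, hxi⟩
            obtain ⟨s, -, hxs⟩ := Finset.mem_biUnion.mp hxU
            rcases eq_or_ne s i0 with rfl | hs
            · exact Or.inr hxs
            · refine Or.inl ⟨?_, hxi⟩
              have hxV : x ∈ V := Finset.mem_sdiff.mpr ⟨hxU, hnd hs hxs⟩
              exact hVsub hxV
        rw [heq] at hW
        exact hW
    · -- K empty: U' = V, done with i0
      refine ⟨i0, ?_⟩
      have heq : U' = U \ J i0 := by
        ext x
        simp only [hU', Finset.mem_filter, Finset.mem_sdiff]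
        constructor
        · rintro ⟨hxU, hbx⟩
          refine ⟨hxU, fun hxi0 => ?_⟩
          exact hKne ⟨x, Finset.mem_filter.mpr ⟨hxi0, hbx⟩⟩
        · rintro ⟨hxU, hxi0⟩
          exact ⟨hxU, V.min'_le x (Finset.mem_sdiff.mpr ⟨hxU, hxi0⟩)⟩
      rw [← heq]
      exact hU'B

theorem chordal_flag_condition (n ℓ : ℕ) (hℓ : 2 ≤ ℓ)
    (B : Finset (Finset (Fin n))) (hB : IsBuildingSet B) (hch : IsChordal B)
    (J : Fin ℓ → Finset (Fin n)) (hJ : ∀ s, J s ∈ B)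
    (hdisj : ∀ s t : Fin ℓ, s ≠ t → Disjoint (J s) (J t))
    (hunion : Finset.univ.biUnion J ∈ B) :
    ∃ i : Fin ℓ, Finset.univ.biUnion J \ J i ∈ B := by
  exact chordal_aux n ℓ hℓ B hB hch (Finset.univ.biUnion J).card J le_rfl hJ hdisj hunion
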